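/- Let f : ℝ → ℝ be continuously differentiable, w ∈ Fin N → ℝ, b ∈ ℝ, and define the single-nonlinearity model S(x) = f(∑_i w_i x_i + b). Fix an input x and baseline x̄ with z := ∑_i w_i x_i + b ≠ z̄ := ∑_i w_i x̄_i + b. Then for every index i, the DeepLIFT (Rescale) attribution equals the Integrated Gradients attribution exactly: (x_i − x̄_i) · w_i · (f(z) − f(z̄))/(z − z̄) = (x_i − x̄_i) · ∫_0^1 f'(z̄ + α(z − z̄)) · w_i dα. -/

import Mathlib

open intervalIntegral

/-- **DeepLIFT (Rescale) equals Integrated Gradients on a single-nonlinearity model.**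
For the model `S(x) = f (∑ i, w i * x i + b)` with `f` continuously differentiable, an
input `x` and a baseline `x̄` whose pre-activations `z = ∑ i, w i * x i + b` and
`z̄ = ∑ i, w i * x̄ i + b` differ, the DeepLIFT (Rescale) attribution of every feature
equals its Integrated Gradients attribution:
`(x_i - x̄_i) ⬝ w_i ⬝ (f(z) - f(z̄))/(z - z̄) = (x_i - x̄_i) ⬝ ∫_0^1 f'(z̄ + α(z - z̄)) ⬝ w_i dα`. -/
theorem deeplift_eq_integrated_gradients_single_nonlinearity
    (N : ℕ) (f : ℝ → ℝ) (hf : ContDiff ℝ 1 f)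
    (w : Fin N → ℝ) (b : ℝ) (x xb : Fin N → ℝ)
    (z zb : ℝ)
    (hz : z = ∑ i, w i * x i + b) (hzb : zb = ∑ i, w i * xb i + b)
    (hne : z ≠ zb) :
    ∀ i : Fin N,
      (x i - xb i) * w i * ((f z - f zb) / (z - zb)) =
        (x i - xb i) * ∫ α in (0:ℝ)..1, deriv f (zb + α * (z - zb)) * w i := by
  intro i
  have hderiv : ∀ α ∈ Set.uIcc (0:ℝ) 1,
      HasDerivAt (fun t : ℝ => f (zb + t * (z - zb)))
        (deriv f (zb + α * (z - zb)) * (z - zb)) α := by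
    intro α _
    have h1 : HasDerivAt (fun t : ℝ => zb + t * (z - zb)) (z - zb) α := by
      simpa using ((hasDerivAt_id α).mul_const (z - zb)).const_add zb
    have h2 : HasDerivAt f (deriv f (zb + α * (z - zb))) (zb + α * (z - zb)) :=
      (hf.differentiable one_ne_zero (zb + α * (z - zb))).hasDerivAt
    exact h2.comp α h1
  have hcont : ContinuousOn (fun α : ℝ => deriv f (zb + α * (z - zb)) * (z - zb))
      (Set.uIcc (0:ℝ) 1) := by
    have : Continuous (deriv f) := (hf.iterate_deriv' 0 1).continuous
    exact ((this.comp (by continuity)).mul continuous_const).continuousOn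
  have hint : (∫ α in (0:ℝ)..1, deriv f (zb + α * (z - zb)) * (z - zb))
      = f (zb + 1 * (z - zb)) - f (zb + 0 * (z - zb)) := by
    simpa using intervalIntegral.integral_eq_sub_of_hasDerivAt hderiv
      (hcont.intervalIntegrable)
  have hzzb : z - zb ≠ 0 := sub_ne_zero.mpr hne
  have key : (∫ α in (0:ℝ)..1, deriv f (zb + α * (z - zb)))
      = (f z - f zb) / (z - zb) := by
    have h2 : (∫ α in (0:ℝ)..1, deriv f (zb + α * (z - zb))) * (z - zb)
        = f z - f zb := by
      rw [← intervalIntegral.integral_mul_const, hint]; ring_nf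
    field_simp [← h2]
    rw [mul_comm]; exact h2
  rw [intervalIntegral.integral_mul_const, key]
  ring
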